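/- Consider the stable matching game (with known preferences) started from a good initial pure strategy profile x^0. Consider any sequence of updates in which at each step an arbitrary subset of players that includes at least one player not currently playing a best response updates their actions by playing pure best responses. Then the sequence of updates reaches a pure Nash equilibrium in no more than |M|·|W| iterations. -/
import Mathlib


open Finset Real MeasureTheory

namespace SM

variable {n : ℕ}

/-- The set of men that woman `w` strictly prefers to man `m`
(`rankW w k` is woman `w`'s cardinal ranking score of man `k`;
`k >_w m` iff `rankW w m < rankW w k`). -/
noncomputable def better (rankW : Fin n → Fin n → ℝ) (w m : Fin n) : Finset (Fin n) :=
  Finset.univ.filter fun k => rankW w m < rankW w k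

/-- Market assumptions: men's cardinal preferences lie in `(0,1]` with no ties, and each
woman's ranking of the men is strict (injective scores). -/
def MarketHyp (μp rankW : Fin n → Fin n → ℝ) : Prop :=
  (∀ m w, μp m w ∈ Set.Ioc (0:ℝ) 1) ∧
  (∀ m w w', w ≠ w' → μp m w ≠ μp m w') ∧
  (∀ w, Function.Injective (rankW w))

/-- `v_{mw}(x) = μ_{mw} ∏_{k >_w m} (1 - x_{kw})`. -/
noncomputable def vv (μp rankW : Fin n → Fin n → ℝ) (x : Fin n → Fin n → ℝ) (m w : Fin n) : ℝ :=
  μp m w * ∏ k ∈ better rankW w m, (1 - x k w)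

/-- Payoff `u_m(x) = ∑_w v_{mw}(x) x_{mw}` of man `m` in the stable matching game. -/
noncomputable def uu (μp rankW : Fin n → Fin n → ℝ) (x : Fin n → Fin n → ℝ) (m : Fin n) : ℝ :=
  ∑ w, vv μp rankW x m w * x m w

/-- Mixed strategy: a probability vector over the women. -/
def IsStrategy (y : Fin n → ℝ) : Prop := (∀ w, 0 ≤ y w) ∧ ∑ w, y w = 1

/-- Pure strategy: the indicator vector of a single woman. -/
def IsPure (y : Fin n → ℝ) : Prop := ∃ w₀, y = fun w => if w = w₀ then (1:ℝ) else 0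

/-- (Mixed) Nash equilibrium of the stable matching game. -/
def IsNE (μp rankW : Fin n → Fin n → ℝ) (x : Fin n → Fin n → ℝ) : Prop :=
  (∀ m, IsStrategy (x m)) ∧
  ∀ m y, IsStrategy y → uu μp rankW (Function.update x m y) m ≤ uu μp rankW x m

/-- Pure Nash equilibrium of the stable matching game. -/
def IsPureNE (μp rankW : Fin n → Fin n → ℝ) (x : Fin n → Fin n → ℝ) : Prop :=
  (∀ m, IsPure (x m)) ∧
  ∀ m y, IsPure y → uu μp rankW (Function.update x m y) m ≤ uu μp rankW x m

/-- Characteristic vector of the perfect matching `σ`. -/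
def charVec (σ : Equiv.Perm (Fin n)) : Fin n → Fin n → ℝ :=
  fun m w => if w = σ m then 1 else 0

/-- A perfect matching `σ` is stable iff it admits no blocking pair `(m, σ m')`. -/
def IsStableMatching (μp rankW : Fin n → Fin n → ℝ) (σ : Equiv.Perm (Fin n)) : Prop :=
  ¬ ∃ m m' : Fin n, m ≠ m' ∧ μp m (σ m) < μp m (σ m') ∧ rankW (σ m') m' < rankW (σ m') m

/-- `Δ = min_{m, w ≠ w'} |μ_{mw} - μ_{mw'}|`. -/
noncomputable def gapDelta (μp : Fin n → Fin n → ℝ) : ℝ :=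
  sInf {d : ℝ | ∃ m w w' : Fin n, w ≠ w' ∧ d = |μp m w - μp m w'|}

/-- `μ_min = min_{m,w} μ_{mw}`. -/
noncomputable def muMin (μp : Fin n → Fin n → ℝ) : ℝ :=
  sInf {a : ℝ | ∃ m w : Fin n, a = μp m w}

/-- `μ_max = max_{m,w} μ_{mw}`. -/
noncomputable def muMax (μp : Fin n → Fin n → ℝ) : ℝ :=
  sSup {a : ℝ | ∃ m w : Fin n, a = μp m w}

/-- Entrywise ℓ¹ distance on strategy profiles. -/
noncomputable def l1dist (x y : Fin n → Fin n → ℝ) : ℝ :=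
  ∑ m, ∑ w, |x m w - y m w|

/-- The logit (exponential-weights) map. -/
noncomputable def logit (η : ℝ) (L : Fin n → ℝ) (w : Fin n) : ℝ :=
  Real.exp (η * L w) / ∑ w', Real.exp (η * L w')

/-- The strategy profile of indicator vectors associated with the action profile `a`
(man `m` proposes to woman `a m`). -/
def pureProfile (a : Fin n → Fin n) : Fin n → Fin n → ℝ := fun m w => if w = a m then 1 else 0

/-- Payoff of man `m` at the pure action profile `a`. -/
noncomputable def uP (μp rankW : Fin n → Fin n → ℝ) (a : Fin n → Fin n) (m : Fin n) : ℝ :=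
  uu μp rankW (pureProfile a) m

/-- Man `m` is playing a (pure) best response at the action profile `a`. -/
def IsBR (μp rankW : Fin n → Fin n → ℝ) (a : Fin n → Fin n) (m : Fin n) : Prop :=
  ∀ w : Fin n, uP μp rankW (Function.update a m w) m ≤ uP μp rankW a m

/-- Pure Nash equilibrium of the pure-action stable matching game. -/
def IsPureNEAction (μp rankW : Fin n → Fin n → ℝ) (a : Fin n → Fin n) : Prop :=
  ∀ m, IsBR μp rankW a m

/-- Man `m` is matched at `a`: no man more preferred by woman `a m` also proposes to her. -/
def MatchedIn (rankW : Fin n → Fin n → ℝ) (a : Fin n → Fin n) (m : Fin n) : Prop :=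
  ∀ k ∈ better rankW (a m) m, a k ≠ a m

/-- Good state: every matched man is at his best response. -/
def GoodState (μp rankW : Fin n → Fin n → ℝ) (a : Fin n → Fin n) : Prop :=
  ∀ m, MatchedIn rankW a m → IsBR μp rankW a m

open scoped Classical

/-- Woman `w` is available to man `m` at profile `a`: no better man proposes to her. -/
def Avail (rankW : Fin n → Fin n → ℝ) (a : Fin n → Fin n) (w m : Fin n) : Prop :=
  ∀ k ∈ better rankW w m, a k ≠ w

lemma notMem_better (rankW : Fin n → Fin n → ℝ) (w m : Fin n) : m ∉ better rankW w m := by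
  simp [better]

lemma uP_eq (μp rankW : Fin n → Fin n → ℝ) (a : Fin n → Fin n) (m : Fin n) :
    uP μp rankW a m = if Avail rankW a (a m) m then μp m (a m) else 0 := by
  unfold uP uu vv pureProfile Avail
  rw [Finset.sum_eq_single (a m)]
  · rw [if_pos rfl, mul_one]
    by_cases h : ∀ k ∈ better rankW (a m) m, a k ≠ a m
    · rw [if_pos h, Finset.prod_eq_one, mul_one]
      intro k hk
      rw [if_neg (Ne.symm (h k hk))]; ring
    · rw [if_neg h]
      push_neg at h
      obtain ⟨k, hk, hak⟩ := h
      rw [Finset.prod_eq_zero hk]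
      · ring
      · rw [if_pos hak.symm]; ring
  · intro w _ hw
    rw [if_neg hw, mul_zero]
  · intro h; exact absurd (Finset.mem_univ _) h

lemma uP_update (μp rankW : Fin n → Fin n → ℝ) (a : Fin n → Fin n) (m w : Fin n) :
    uP μp rankW (Function.update a m w) m = if Avail rankW a w m then μp m w else 0 := by
  rw [uP_eq]
  simp only [Function.update_self]
  have h : Avail rankW (Function.update a m w) w m ↔ Avail rankW a w m := by
    unfold Avail
    constructor
    · intro h k hk
      have hkm : k ≠ m := fun e => notMem_better rankW w m (e ▸ hk)
      have := h k hk
      rwa [Function.update_of_ne hkm] at this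
    · intro h k hk
      have hkm : k ≠ m := fun e => notMem_better rankW w m (e ▸ hk)
      rw [Function.update_of_ne hkm]
      exact h k hk
  exact if_congr h rfl rfl

lemma uP_nonneg {μp rankW : Fin n → Fin n → ℝ} (hM : MarketHyp μp rankW)
    (a : Fin n → Fin n) (m : Fin n) : 0 ≤ uP μp rankW a m := by
  rw [uP_eq]
  split
  · exact le_of_lt (hM.1 m (a m)).1
  · exact le_refl 0

/-- The potential: for each woman, the number of men ranked at or below her best proposer. -/
noncomputable def pot (rankW : Fin n → Fin n → ℝ) (b : Fin n → Fin n) : ℕ :=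
  ∑ w, (Finset.univ.filter fun k => ∃ j, b j = w ∧ rankW w k ≤ rankW w j).card

section Step

variable {μp rankW : Fin n → Fin n → ℝ} {b b' : Fin n → Fin n} {Pl : Finset (Fin n)}

/-- In a good state, matched men do not change their action. -/
lemma stay (hM : MarketHyp μp rankW) (hgood : GoodState μp rankW b)
    (hPl2 : ∀ m ∉ Pl, b' m = b m)
    (hPl3 : ∀ m ∈ Pl, ∀ w : Fin n,
      uP μp rankW (Function.update b m w) m ≤ uP μp rankW (Function.update b m (b' m)) m)
    (m : Fin n) (hm : MatchedIn rankW b m) : b' m = b m := by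
  by_cases hmem : m ∈ Pl
  · have hu : uP μp rankW b m = μp m (b m) := by
      rw [uP_eq, if_pos (show Avail rankW b (b m) m from hm)]
    have h1 : uP μp rankW b m ≤ uP μp rankW (Function.update b m (b' m)) m := by
      have := hPl3 m hmem (b m)
      rwa [Function.update_eq_self] at this
    have h2 : uP μp rankW (Function.update b m (b' m)) m ≤ uP μp rankW b m :=
      hgood m hm (b' m)
    have heq : uP μp rankW (Function.update b m (b' m)) m = μp m (b m) := by
      rw [← hu]; exact le_antisymm h2 h1
    rw [uP_update] at heq
    by_cases hav : Avail rankW b (b' m) m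
    · rw [if_pos hav] at heq
      by_contra hne
      exact hM.2.1 m (b' m) (b m) hne heq
    · rw [if_neg hav] at heq
      exact absurd heq (ne_of_lt (hM.1 m (b m)).1)
  · exact hPl2 m hmem

/-- Each woman keeps a proposer at least as good as any current proposer. -/
lemma persist (hM : MarketHyp μp rankW) (hgood : GoodState μp rankW b)
    (hPl2 : ∀ m ∉ Pl, b' m = b m)
    (hPl3 : ∀ m ∈ Pl, ∀ w : Fin n,
      uP μp rankW (Function.update b m w) m ≤ uP μp rankW (Function.update b m (b' m)) m)
    (w j : Fin n) (hj : b j = w) :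
    ∃ j', b' j' = w ∧ rankW w j ≤ rankW w j' := by
  have hne : (Finset.univ.filter fun k => b k = w).Nonempty :=
    ⟨j, by simp [hj]⟩
  obtain ⟨j', hj'mem, hj'max⟩ := Finset.exists_max_image _ (rankW w) hne
  have hbj' : b j' = w := (Finset.mem_filter.mp hj'mem).2
  have hmatched : MatchedIn rankW b j' := by
    intro k hk hbk
    rw [hbj'] at hk hbk
    have hk' : rankW w j' < rankW w k := (Finset.mem_filter.mp hk).2
    have : rankW w k ≤ rankW w j' := hj'max k (by simp [hbk])
    linarith
  refine ⟨j', ?_, hj'max j (by simp [hj])⟩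
  rw [stay hM hgood hPl2 hPl3 j' hmatched, hbj']

lemma availMono (hM : MarketHyp μp rankW) (hgood : GoodState μp rankW b)
    (hPl2 : ∀ m ∉ Pl, b' m = b m)
    (hPl3 : ∀ m ∈ Pl, ∀ w : Fin n,
      uP μp rankW (Function.update b m w) m ≤ uP μp rankW (Function.update b m (b' m)) m)
    (w m : Fin n) (h : Avail rankW b' w m) : Avail rankW b w m := by
  intro k hk hbk
  obtain ⟨j', hbj', hle⟩ := persist hM hgood hPl2 hPl3 w k hbk
  have hkm : rankW w m < rankW w k := (Finset.mem_filter.mp hk).2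
  exact h j' (Finset.mem_filter.mpr ⟨Finset.mem_univ _, lt_of_lt_of_le hkm hle⟩) hbj'

/-- Good states are preserved. -/
lemma goodNext (hM : MarketHyp μp rankW) (hgood : GoodState μp rankW b)
    (hPl2 : ∀ m ∉ Pl, b' m = b m)
    (hPl3 : ∀ m ∈ Pl, ∀ w : Fin n,
      uP μp rankW (Function.update b m w) m ≤ uP μp rankW (Function.update b m (b' m)) m) :
    GoodState μp rankW b' := by
  intro m hm w
  have hub' : uP μp rankW b' m = μp m (b' m) := by
    rw [uP_eq, if_pos (show Avail rankW b' (b' m) m from hm)]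
  rw [uP_update, hub']
  by_cases hav : Avail rankW b' w m
  · rw [if_pos hav]
    have havb : Avail rankW b w m := availMono hM hgood hPl2 hPl3 w m hav
    by_cases hchg : b' m = b m
    · -- m kept his action; show he was matched at b
      have hm' : ∀ k ∈ better rankW (b m) m, b' k ≠ b m := by
        rw [← hchg]; exact hm
      have hmb : MatchedIn rankW b m := by
        intro k hk hbk
        obtain ⟨j', hbj', hle⟩ := persist hM hgood hPl2 hPl3 (b m) k hbk
        have hkm : rankW (b m) m < rankW (b m) k := (Finset.mem_filter.mp hk).2
        exact hm' j' (Finset.mem_filter.mpr ⟨Finset.mem_univ _,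
          lt_of_lt_of_le hkm hle⟩) hbj'
      have := hgood m hmb w
      rw [uP_update, if_pos havb, uP_eq,
        if_pos (show Avail rankW b (b m) m from hmb), ← hchg] at this
      exact this
    · -- m moved, so m ∈ Pl and b' m maximized
      have hmem : m ∈ Pl := by
        by_contra hmem
        exact hchg (hPl2 m hmem)
      have h3 := hPl3 m hmem w
      rw [uP_update, if_pos havb, uP_update] at h3
      have havb' : Avail rankW b (b' m) m :=
        availMono hM hgood hPl2 hPl3 (b' m) m (show Avail rankW b' (b' m) m from hm)
      rwa [if_pos havb'] at h3
  · rw [if_neg hav]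
    exact le_of_lt (hM.1 m (b' m)).1

/-- The potential strictly increases at each update step. -/
lemma potNext (hM : MarketHyp μp rankW) (hgood : GoodState μp rankW b)
    (hPl1 : ∃ m ∈ Pl, ¬ IsBR μp rankW b m)
    (hPl2 : ∀ m ∉ Pl, b' m = b m)
    (hPl3 : ∀ m ∈ Pl, ∀ w : Fin n,
      uP μp rankW (Function.update b m w) m ≤ uP μp rankW (Function.update b m (b' m)) m) :
    pot rankW b < pot rankW b' := by
  obtain ⟨m₀, hm₀Pl, hm₀⟩ := hPl1
  -- m₀ strictly improves: his new woman is available and new to him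
  have hstrict : uP μp rankW b m₀ < uP μp rankW (Function.update b m₀ (b' m₀)) m₀ := by
    unfold IsBR at hm₀
    push_neg at hm₀
    obtain ⟨w, hw⟩ := hm₀
    exact lt_of_lt_of_le hw (hPl3 m₀ hm₀Pl w)
  set w₀ := b' m₀ with hw₀
  have hposdev : 0 < uP μp rankW (Function.update b m₀ w₀) m₀ :=
    lt_of_le_of_lt (uP_nonneg hM b m₀) hstrict
  have havail : Avail rankW b w₀ m₀ := by
    by_contra hav
    rw [uP_update, if_neg hav] at hposdev
    exact lt_irrefl 0 hposdev
  have hnew : b m₀ ≠ w₀ := by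
    intro he
    rw [← he, Function.update_eq_self] at hstrict
    exact lt_irrefl _ hstrict
  -- the summand at w₀ strictly increases; all summands weakly increase
  have hsub : ∀ w : Fin n,
      (Finset.univ.filter fun k => ∃ j, b j = w ∧ rankW w k ≤ rankW w j) ⊆
      (Finset.univ.filter fun k => ∃ j, b' j = w ∧ rankW w k ≤ rankW w j) := by
    intro w k hk
    obtain ⟨-, j, hbj, hle⟩ := Finset.mem_filter.mp hk
    obtain ⟨j', hbj', hle'⟩ := persist hM hgood hPl2 hPl3 w j hbj
    exact Finset.mem_filter.mpr ⟨Finset.mem_univ _, j', hbj', le_trans hle hle'⟩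
  have hmem' : m₀ ∈ (Finset.univ.filter fun k => ∃ j, b' j = w₀ ∧ rankW w₀ k ≤ rankW w₀ j) :=
    Finset.mem_filter.mpr ⟨Finset.mem_univ _, m₀, rfl, le_refl _⟩
  have hmem : m₀ ∉ (Finset.univ.filter fun k => ∃ j, b j = w₀ ∧ rankW w₀ k ≤ rankW w₀ j) := by
    intro hmem
    obtain ⟨-, j, hbj, hle⟩ := Finset.mem_filter.mp hmem
    have hjm : j ≠ m₀ := fun e => hnew (e ▸ hbj)
    have hlt : rankW w₀ m₀ < rankW w₀ j :=
      lt_of_le_of_ne hle (fun e => hjm (hM.2.2 w₀ e.symm))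
    exact havail j (Finset.mem_filter.mpr ⟨Finset.mem_univ _, hlt⟩) hbj
  apply Finset.sum_lt_sum
  · intro w _
    exact Finset.card_le_card (hsub w)
  · exact ⟨w₀, Finset.mem_univ _,
      Finset.card_lt_card (Finset.ssubset_iff_of_subset (hsub w₀) |>.mpr ⟨m₀, hmem', hmem⟩)⟩

end Step

lemma pot_le (rankW : Fin n → Fin n → ℝ) (b : Fin n → Fin n) : pot rankW b ≤ n * n := by
  unfold pot
  calc ∑ w : Fin n, (Finset.univ.filter fun k => ∃ j, b j = w ∧ rankW w k ≤ rankW w j).card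
      ≤ ∑ _w : Fin n, n := by
        apply Finset.sum_le_sum
        intro w _
        calc (Finset.univ.filter fun k => ∃ j, b j = w ∧ rankW w k ≤ rankW w j).card
            ≤ (Finset.univ : Finset (Fin n)).card := Finset.card_le_card (Finset.filter_subset _ _)
          _ = n := by simp
    _ = n * n := by simp [Finset.sum_const, mul_comm]

lemma pot_pos (rankW : Fin n → Fin n → ℝ) (b : Fin n → Fin n) (hn : 0 < n) :
    1 ≤ pot rankW b := by
  have m₀ : Fin n := ⟨0, hn⟩
  have h1 : 1 ≤ (Finset.univ.filter fun k => ∃ j, b j = b m₀ ∧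
      rankW (b m₀) k ≤ rankW (b m₀) j).card := by
    rw [Nat.one_le_iff_ne_zero, ← Nat.pos_iff_ne_zero, Finset.card_pos]
    exact ⟨m₀, Finset.mem_filter.mpr ⟨Finset.mem_univ _, m₀, rfl, le_refl _⟩⟩
  calc 1 ≤ _ := h1
    _ ≤ pot rankW b := Finset.single_le_sum (f := fun w =>
        (Finset.univ.filter fun k => ∃ j, b j = w ∧ rankW w k ≤ rankW w j).card)
        (fun _ _ => Nat.zero_le _) (Finset.mem_univ (b m₀))

/-- Lemma 7: starting from a good state, any sequence of updates in which,
at each step, a subset of players containing at least one player not at his best response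
switches to best responses, reaches a pure Nash equilibrium within `|M||W|` iterations. -/
theorem good_state_best_response_convergence {n : ℕ} (μp rankW : Fin n → Fin n → ℝ)
    (hM : MarketHyp μp rankW)
    (a : ℕ → Fin n → Fin n) (hgood : GoodState μp rankW (a 0))
    (hupd : ∀ t : ℕ, ¬ IsPureNEAction μp rankW (a t) →
      ∃ Pl : Finset (Fin n),
        (∃ m ∈ Pl, ¬ IsBR μp rankW (a t) m) ∧
        (∀ m ∉ Pl, a (t+1) m = a t m) ∧
        (∀ m ∈ Pl, ∀ w : Fin n,
          uP μp rankW (Function.update (a t) m w) m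
            ≤ uP μp rankW (Function.update (a t) m (a (t+1) m)) m)) :
    ∃ t : ℕ, t ≤ n * n ∧ IsPureNEAction μp rankW (a t) := by
  rcases Nat.eq_zero_or_pos n with hn | hn
  · subst hn
    exact ⟨0, le_refl _, fun m => absurd m.2 (by omega)⟩
  by_contra hcon
  push_neg at hcon
  have key : ∀ t, t ≤ n * n → GoodState μp rankW (a t) ∧ pot rankW (a 0) + t ≤ pot rankW (a t) := by
    intro t
    induction t with
    | zero => exact fun _ => ⟨hgood, le_refl _⟩
    | succ t ih =>
      intro ht
      have ht' : t ≤ n * n := Nat.le_of_succ_le ht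
      obtain ⟨hg, hp⟩ := ih ht'
      have hne : ¬ IsPureNEAction μp rankW (a t) := hcon t ht'
      obtain ⟨Pl, hPl1, hPl2, hPl3⟩ := hupd t hne
      refine ⟨goodNext hM hg hPl2 hPl3, ?_⟩
      have := potNext hM hg hPl1 hPl2 hPl3
      omega
  obtain ⟨-, hp⟩ := key (n * n) (le_refl _)
  have h1 := pot_pos rankW (a 0) hn
  have h2 := pot_le rankW (a (n * n))
  omega

end SM
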